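/- Let D = (T, χ, λ) be a hypertree decomposition of an extended subhypergraph H' = (E', Sp, Con), let p be a node of T with child c, and let C' be a [χ(p)]-component of H'. If C' ∩ cov(T_c) ≠ ∅ then C' ⊆ cov(T_c). In other words, cov(T_c) is a union of [χ(p)]-components of H'. -/

import Mathlib

open scoped Classical

/-- A hypergraph: a finite set of nonempty hyperedges over vertex type `V`. -/
structure HDHypergraph (V : Type) [DecidableEq V] where
  edges : Finset (Finset V)
  edge_nonempty : ∀ e ∈ edges, e.Nonempty

/-- The vertex set of a hypergraph: the union of its edges. -/
noncomputable def HDHypergraph.verts {V : Type} [DecidableEq V] (H : HDHypergraph V) :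
    Finset V := H.edges.sup id

/-- An extended subhypergraph `(E', Sp, Con)` of a hypergraph `H`. -/
structure ExtSubHG {V : Type} [DecidableEq V] (H : HDHypergraph V) where
  E : Finset (Finset V)
  Sp : Finset (Finset V)
  Con : Finset V
  E_subset : E ⊆ H.edges
  Sp_subset : ∀ s ∈ Sp, s ⊆ H.verts
  Con_subset : Con ⊆ H.verts

/-- The vertices of an extended subhypergraph: `V(H') = ⋃E' ∪ ⋃Sp`. -/
noncomputable def ExtSubHG.verts {V : Type} [DecidableEq V] {H : HDHypergraph V}
    (H' : ExtSubHG H) : Finset V := (H'.E ∪ H'.Sp).sup id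

/-- A finite rooted tree, given by a parent function from which the root is reachable. -/
structure RTree (α : Type) where
  root : α
  parent : α → α
  parent_root : parent root = root
  reaches_root : ∀ u, ∃ k, parent^[k] u = root

namespace RTree

variable {α : Type}

/-- `u` is an ancestor of `w` (possibly `u = w`). -/
def isAnc (T : RTree α) (u w : α) : Prop := ∃ k, T.parent^[k] w = u

/-- `u` is a proper ancestor of `w`. -/
def properAnc (T : RTree α) (u w : α) : Prop := T.isAnc u w ∧ u ≠ w

/-- `c` is a child of `u`. -/
def isChild (T : RTree α) (c u : α) : Prop := T.parent c = u ∧ c ≠ u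

/-- The subtree `T_u` rooted at `u`: all descendants of `u` (including `u`). -/
noncomputable def subtree (T : RTree α) [Fintype α] (u : α) : Finset α :=
  Finset.univ.filter (fun w => T.isAnc u w)

/-- The part of the tree strictly above `u`: all nodes outside the subtree `T_u`. -/
noncomputable def outside (T : RTree α) [Fintype α] (u : α) : Finset α :=
  Finset.univ.filter (fun w => ¬ T.isAnc u w)

/-- `x` lies on the (unique) path between `u` and `w` in the tree `T`. -/
def onPath (T : RTree α) (u w x : α) : Prop :=
  (T.isAnc x u ∨ T.isAnc x w) ∧ ∀ a, T.isAnc a u → T.isAnc a w → T.isAnc a x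

/-- A set of nodes is connected in `T` if it is closed under taking paths. -/
def connectedIn (T : RTree α) (S : Set α) : Prop :=
  ∀ u ∈ S, ∀ w ∈ S, ∀ x, T.onPath u w x → x ∈ S

/-- `u` is a leaf of `T`. -/
def isLeaf (T : RTree α) (u : α) : Prop := ∀ c, ¬ T.isChild c u

end RTree

/-- `[U]`-adjacency on a set `F` of (possibly special) edges:
`f` and `g` are adjacent iff they share a vertex outside `U`. -/
def UAdj {V : Type} [DecidableEq V] (F : Finset (Finset V)) (U : Finset V)
    (f g : Finset V) : Prop :=
  f ∈ F ∧ g ∈ F ∧ ((f ∩ g) \ U).Nonempty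

/-- `[U]`-connectedness: the transitive closure of `[U]`-adjacency (note that this
relation is reflexive exactly on the edges `f ∈ F` with `f \ U ≠ ∅`). -/
def UConn {V : Type} [DecidableEq V] (F : Finset (Finset V)) (U : Finset V)
    (f g : Finset V) : Prop :=
  Relation.TransGen (UAdj F U) f g

/-- A `[U]`-component of `F`: a maximally `[U]`-connected subset of `F`. -/
def IsUComponent {V : Type} [DecidableEq V] (F : Finset (Finset V)) (U : Finset V)
    (C : Finset (Finset V)) : Prop :=
  C ⊆ F ∧ C.Nonempty ∧ (∀ f ∈ C, ∀ g ∈ C, UConn F U f g) ∧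
  ∀ C', C ⊂ C' → C' ⊆ F → ∃ f ∈ C', ∃ g ∈ C', ¬ UConn F U f g

/-- Conditions (1)–(6): `(T, χ, lam)` is a hypertree decomposition of the extended
subhypergraph `(E', Sp, Con)` of the hypergraph `H`. -/
structure IsHD {V α : Type} [DecidableEq V] (H : HDHypergraph V)
    (E' Sp : Finset (Finset V)) (Con : Finset V)
    (T : RTree α) (χ : α → Finset V) (lam : α → Finset (Finset V)) : Prop where
  cond1 : ∀ u, (lam u ⊆ H.edges ∧ χ u ⊆ (lam u).sup id) ∨
    (∃ s ∈ Sp, lam u = {s} ∧ χ u = s)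
  cond2E : ∀ f ∈ E', ∃ u, f ⊆ χ u
  cond2Sp : ∀ f ∈ Sp, ∃ u, lam u = {f} ∧ χ u = f
  cond3 : ∀ v ∈ (E' ∪ Sp).sup id, T.connectedIn {u | v ∈ χ u}
  cond4 : ∀ u w, T.isAnc u w → χ w ∩ (lam u).sup id ⊆ χ u
  cond5 : ∀ u, (∃ s ∈ Sp, lam u = {s}) → T.isLeaf u
  cond6 : Con ⊆ χ T.root

/-- A classical hypertree decomposition of a hypergraph `H`
(Gottlob–Leone–Scarcello, conditions (1)–(4)). -/
structure IsClassicalHD {V α : Type} [DecidableEq V] (H : HDHypergraph V)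
    (T : RTree α) (χ : α → Finset V) (lam : α → Finset (Finset V)) : Prop where
  cover : ∀ e ∈ H.edges, ∃ u, e ⊆ χ u
  conn : ∀ v ∈ H.verts, T.connectedIn {u | v ∈ χ u}
  lam_edges : ∀ u, lam u ⊆ H.edges
  chi_sub_lam : ∀ u, χ u ⊆ (lam u).sup id
  special : ∀ u w, T.isAnc u w → χ w ∩ (lam u).sup id ⊆ χ u

/-- `cov(u)`: the (special) edges of `E' ∪ Sp` covered for the first time at node `u`. -/
noncomputable def covAt {V α : Type} [DecidableEq V] (T : RTree α)
    (χ : α → Finset V) (E' Sp : Finset (Finset V)) (u : α) : Finset (Finset V) :=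
  (E' ∪ Sp).filter (fun f => f ⊆ χ u ∧ ∀ u', T.properAnc u' u → ¬ f ⊆ χ u')

/-- `cov(T')` for a set of nodes `T'`. -/
noncomputable def covTree {V α : Type} [DecidableEq V] (T : RTree α)
    (χ : α → Finset V) (E' Sp : Finset (Finset V)) (S : Finset α) :
    Finset (Finset V) :=
  S.biUnion (covAt T χ E' Sp)

/-- Node `u` is a balanced separator of the decomposition `(T, χ)` of `(E', Sp, _)`:
every child subtree covers at most `(|E'| + |Sp|)/2` (special) edges, and the part of
the tree above `u` covers strictly fewer than `(|E'| + |Sp|)/2` (special) edges. -/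
noncomputable def IsBalancedSep {V α : Type} [DecidableEq V] [Fintype α]
    (T : RTree α) (χ : α → Finset V) (E' Sp : Finset (Finset V)) (u : α) : Prop :=
  (∀ c, T.isChild c u →
      2 * (covTree T χ E' Sp (T.subtree c)).card ≤ E'.card + Sp.card) ∧
  2 * (covTree T χ E' Sp (T.outside u)).card < E'.card + Sp.card

/-- The normal form of HDs of extended subhypergraphs (Definition: for every parent `p`
with child `c`, (1) `cov(T_c)` is a `[χ(p)]`-component; (2) some edge of it is covered
at `c`; (3) `χ(c) = ⋃λ(c) ∩ ⋃cov(T_c)`). -/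
noncomputable def IsNormalForm {V α : Type} [DecidableEq V] [Fintype α]
    (E' Sp : Finset (Finset V))
    (T : RTree α) (χ : α → Finset V) (lam : α → Finset (Finset V)) : Prop :=
  ∀ p c, T.isChild c p →
    IsUComponent (E' ∪ Sp) (χ p) (covTree T χ E' Sp (T.subtree c)) ∧
    (∃ f ∈ covTree T χ E' Sp (T.subtree c), f ⊆ χ c) ∧
    χ c = (lam c).sup id ∩ (covTree T χ E' Sp (T.subtree c)).sup id

namespace RTree

variable {α : Type}

lemma isAnc_refl (T : RTree α) (u : α) : T.isAnc u u := ⟨0, rfl⟩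

lemma isAnc_trans (T : RTree α) {a b c : α} (h1 : T.isAnc a b) (h2 : T.isAnc b c) :
    T.isAnc a c := by
  obtain ⟨j, hj⟩ := h1
  obtain ⟨k, hk⟩ := h2
  exact ⟨j + k, by rw [Function.iterate_add_apply, hk, hj]⟩

lemma anc_comparable (T : RTree α) {a b u : α} (h1 : T.isAnc a u) (h2 : T.isAnc b u) :
    T.isAnc a b ∨ T.isAnc b a := by
  obtain ⟨i, hi⟩ := h1
  obtain ⟨j, hj⟩ := h2
  rcases le_total i j with h | h
  · right
    refine ⟨j - i, ?_⟩
    rw [← hi, ← Function.iterate_add_apply, Nat.sub_add_cancel h, hj]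
  · left
    refine ⟨i - j, ?_⟩
    rw [← hj, ← Function.iterate_add_apply, Nat.sub_add_cancel h, hi]

lemma isAnc_parent_of_properAnc (T : RTree α) {a c : α} (h : T.properAnc a c) :
    T.isAnc a (T.parent c) := by
  obtain ⟨⟨k, hk⟩, hne⟩ := h
  cases k with
  | zero => exact absurd hk.symm hne
  | succ k' => exact ⟨k', by rw [← Function.iterate_succ_apply, hk]⟩

/-- Depth of a node: minimal number of parent steps to the root. -/
noncomputable def depth (T : RTree α) (u : α) : ℕ := Nat.find (T.reaches_root u)

lemma depth_spec (T : RTree α) (u : α) : T.parent^[T.depth u] u = T.root :=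
  Nat.find_spec (T.reaches_root u)

lemma depth_root (T : RTree α) : T.depth T.root = 0 :=
  Nat.le_zero.mp (Nat.find_le (by simp))

lemma eq_root_of_depth_eq_zero (T : RTree α) {u : α} (h : T.depth u = 0) : u = T.root := by
  have := T.depth_spec u
  rwa [h] at this

lemma depth_lt_of_properAnc (T : RTree α) {a w : α} (h : T.properAnc a w) :
    T.depth a < T.depth w := by
  obtain ⟨⟨k, hk⟩, hne⟩ := h
  have hk0 : k ≠ 0 := by
    rintro rfl
    exact hne hk.symm
  set m := T.depth w with hm
  have hmspec : T.parent^[m] w = T.root := T.depth_spec w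
  rcases le_or_gt k m with hkm | hkm
  · have : T.parent^[m - k] a = T.root := by
      rw [← hk, ← Function.iterate_add_apply, Nat.sub_add_cancel hkm, hmspec]
    have hda : T.depth a ≤ m - k := Nat.find_le this
    have : m - k < m := Nat.sub_lt (lt_of_lt_of_le (Nat.pos_of_ne_zero hk0) hkm)
      (Nat.pos_of_ne_zero hk0)
    omega
  · have ha : a = T.root := by
      rw [← hk]
      have : k = (k - m) + m := (Nat.sub_add_cancel hkm.le).symm
      rw [this, Function.iterate_add_apply, hmspec, Function.iterate_fixed T.parent_root]
    have hd0 : T.depth a = 0 := by rw [ha, T.depth_root]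
    have hwne : w ≠ T.root := by
      rintro rfl
      exact hne ha
    have : T.depth w ≠ 0 := fun h0 => hwne (T.eq_root_of_depth_eq_zero h0)
    omega

end RTree

/-- `cov(T_c)` is a union of `[χ(p)]`-components: any `[χ(p)]`-component
meeting `cov(T_c)` is contained in it. -/
theorem cov_subtree_union_of_components {V α : Type} [DecidableEq V] [Fintype α]
    (H : HDHypergraph V) (H' : ExtSubHG H) (T : RTree α)
    (χ : α → Finset V) (lam : α → Finset (Finset V))
    (hD : IsHD H H'.E H'.Sp H'.Con T χ lam)
    (p c : α) (hc : T.isChild c p)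
    (C' : Finset (Finset V)) (hC : IsUComponent (H'.E ∪ H'.Sp) (χ p) C')
    (hmeet : (C' ∩ covTree T χ H'.E H'.Sp (T.subtree c)).Nonempty) :
    C' ⊆ covTree T χ H'.E H'.Sp (T.subtree c) := by
  -- Key step: adjacency propagates membership in cov(T_c).
  have key : ∀ f ∈ covTree T χ H'.E H'.Sp (T.subtree c), ∀ g,
      UAdj (H'.E ∪ H'.Sp) (χ p) f g → g ∈ covTree T χ H'.E H'.Sp (T.subtree c) := by
    intro f hf g hadj
    obtain ⟨hfF, hgF, hv⟩ := hadj
    obtain ⟨v, hvmem⟩ := hv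
    have hvf : v ∈ f := (Finset.mem_inter.mp (Finset.mem_sdiff.mp hvmem).1).1
    have hvg : v ∈ g := (Finset.mem_inter.mp (Finset.mem_sdiff.mp hvmem).1).2
    have hvp : v ∉ χ p := (Finset.mem_sdiff.mp hvmem).2
    obtain ⟨u, hu_sub, hu_cov⟩ := Finset.mem_biUnion.mp hf
    have hu_anc : T.isAnc c u := (Finset.mem_filter.mp hu_sub).2
    simp only [covAt, Finset.mem_filter] at hu_cov
    obtain ⟨-, hfχu, -⟩ := hu_cov
    have hvsup : v ∈ (H'.E ∪ H'.Sp).sup id := by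
      exact Finset.le_sup (f := id) hfF hvf
    -- every node covering g lies in the subtree of c
    have hcov_sub : ∀ w, g ⊆ χ w → T.isAnc c w := by
      intro w hw
      by_contra hnc
      have hpath : T.onPath u w p := by
        constructor
        · left
          exact T.isAnc_trans ⟨1, by simp [hc.1]⟩ hu_anc
        · intro a hau haw
          rcases T.anc_comparable hau hu_anc with hac | hca
          · rcases eq_or_ne a c with rfl | hne
            · exact absurd haw hnc
            · have := T.isAnc_parent_of_properAnc ⟨hac, hne⟩
              rwa [hc.1] at this
          · exact absurd (T.isAnc_trans hca haw) hnc
      have hvp' : v ∈ χ p :=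
        hD.cond3 v hvsup u (by exact hfχu hvf) w (by exact hw hvg) p hpath
      exact hvp hvp'
    -- g is covered somewhere
    have hgcov : ∃ w, g ⊆ χ w := by
      rcases Finset.mem_union.mp hgF with hgE | hgSp
      · exact hD.cond2E g hgE
      · obtain ⟨w, -, hw⟩ := hD.cond2Sp g hgSp
        exact ⟨w, hw ▸ le_refl _⟩
    -- take a coverer of minimal depth
    obtain ⟨w1, hw1⟩ := hgcov
    have hS : (Finset.univ.filter (fun w => g ⊆ χ w)).Nonempty :=
      ⟨w1, Finset.mem_filter.mpr ⟨Finset.mem_univ _, hw1⟩⟩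
    obtain ⟨w0, hw0S, hw0min⟩ := Finset.exists_min_image _ (T.depth) hS
    have hw0 : g ⊆ χ w0 := (Finset.mem_filter.mp hw0S).2
    refine Finset.mem_biUnion.mpr ⟨w0, Finset.mem_filter.mpr
      ⟨Finset.mem_univ _, hcov_sub w0 hw0⟩, ?_⟩
    simp only [covAt, Finset.mem_filter]
    refine ⟨hgF, hw0, ?_⟩
    intro u' hu' hgu'
    have hlt := T.depth_lt_of_properAnc hu'
    have := hw0min u' (Finset.mem_filter.mpr ⟨Finset.mem_univ _, hgu'⟩)
    omega
  -- propagate from one element of C' ∩ cov(T_c) along [χ(p)]-connectedness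
  obtain ⟨f0, hf0⟩ := hmeet
  have hf0C : f0 ∈ C' := (Finset.mem_inter.mp hf0).1
  have hf0cov : f0 ∈ covTree T χ H'.E H'.Sp (T.subtree c) := (Finset.mem_inter.mp hf0).2
  intro g hg
  have hconn : UConn (H'.E ∪ H'.Sp) (χ p) f0 g := hC.2.2.1 f0 hf0C g hg
  clear hg
  induction hconn with
  | single h => exact key f0 hf0cov _ h
  | tail _ h2 ih => exact key _ ih _ h2
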